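/- For every integer N ≥ 2 and every square-summable sequence (v_α)_{α≥1} of nonnegative reals, the double sum T₁ = ∑_{|m|≤N} ∑_{n>N} v_{n-m}²/(n² - m²) satisfies T₁ ≤ C·(log N / N)·∑_{α≥1} v_α² for an absolute constant C. -/

import Mathlib

lemma inv_le_log_sub (x : ℝ) (hx : 1 ≤ x) : 1/(x+1) ≤ Real.log (x+1) - Real.log x := by
  have hx0 : 0 < x := by linarith
  have h1 : 0 < x + 1 := by linarith
  have h := Real.log_le_sub_one_of_pos (show 0 < x / (x+1) by positivity)
  rw [Real.log_div (ne_of_gt hx0) (ne_of_gt h1)] at h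
  have h2 : x / (x+1) - 1 = -(1/(x+1)) := by field_simp; ring
  linarith

lemma harmonic_seg (a : ℤ) (ha : 1 ≤ a) : ∀ b : ℤ, a ≤ b →
    ∑ j ∈ Finset.Icc a b, (1:ℝ)/(j:ℝ) ≤ 1/(a:ℝ) + Real.log b - Real.log a := by
  refine Int.le_induction ?_ ?_
  · simp
  · intro b hab ih
    have hins : Finset.Icc a (b+1) = insert (b+1) (Finset.Icc a b) := by
      ext x; simp; omega
    rw [hins, Finset.sum_insert (by simp)]
    have h2 : (1:ℝ) ≤ (b:ℝ) := by exact_mod_cast ha.trans hab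
    have h3 := inv_le_log_sub (b:ℝ) h2
    push_cast
    linarith

lemma img_le_seg (N : ℕ) (α : ℤ) (F : Finset ℤ) (lo hi : ℤ) (hlo : 1 ≤ lo)
    (hmem : ∀ m ∈ F, lo ≤ α + 2*m ∧ α + 2*m ≤ hi) (hle : lo ≤ hi) :
    ∑ m ∈ F, (1:ℝ)/((α:ℝ)+2*(m:ℝ)) ≤ 1/(lo:ℝ) + Real.log hi - Real.log lo := by
  have h1 : ∑ m ∈ F, (1:ℝ)/((α:ℝ)+2*(m:ℝ))
      = ∑ j ∈ F.image (fun m => α + 2*m), (1:ℝ)/(j:ℝ) := by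
    rw [Finset.sum_image (by intros a _ b _ h; simp only at h; omega)]
    apply Finset.sum_congr rfl
    intro m _; push_cast; ring_nf
  rw [h1]
  have h2 : F.image (fun m => α + 2*m) ⊆ Finset.Icc lo hi := by
    intro j hj
    simp only [Finset.mem_image] at hj
    obtain ⟨m, hm, rfl⟩ := hj
    simp [Finset.mem_Icc]; exact hmem m hm
  calc ∑ j ∈ F.image (fun m => α + 2*m), (1:ℝ)/(j:ℝ)
      ≤ ∑ j ∈ Finset.Icc lo hi, (1:ℝ)/(j:ℝ) := by
        apply Finset.sum_le_sum_of_subset_of_nonneg h2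
        intro j hj _
        have : 1 ≤ j := by simp [Finset.mem_Icc] at hj; omega
        positivity
    _ ≤ 1/(lo:ℝ) + Real.log hi - Real.log lo := harmonic_seg lo hlo hi hle

lemma key_bound (N : ℕ) (hN : 2 ≤ N) (α : ℤ) (hα : 1 ≤ α) :
    ∑ m ∈ Finset.Icc (-(N:ℤ)) (N:ℤ),
      (if (N:ℤ) < α + m then 1/((α:ℝ)*((α:ℝ)+2*(m:ℝ))) else 0)
      ≤ 6 * (Real.log N / N) := by
  have hN0 : (0:ℝ) < N := by positivity
  have hNR : (2:ℝ) ≤ (N:ℝ) := by exact_mod_cast hN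
  have hlogN : (1:ℝ)/2 ≤ Real.log N := by
    have := Real.log_two_gt_d9
    have h2 := Real.log_le_log (by norm_num) hNR
    linarith
  have hlogN0 : (0:ℝ) ≤ Real.log N := by linarith
  rw [← Finset.sum_filter]
  rcases le_or_gt α (N:ℤ) with h1 | h1
  · -- small α : filter = Icc (N-α+1) N, each term ≤ 1/(α(N+2))
    have hfil : (Finset.Icc (-(N:ℤ)) (N:ℤ)).filter (fun m => (N:ℤ) < α + m)
        = Finset.Icc ((N:ℤ) - α + 1) (N:ℤ) := by
      ext m; simp [Finset.mem_filter, Finset.mem_Icc]; omega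
    rw [hfil]
    have hbound : ∀ m ∈ Finset.Icc ((N:ℤ) - α + 1) (N:ℤ),
        (1:ℝ)/((α:ℝ)*((α:ℝ)+2*(m:ℝ))) ≤ 1/((α:ℝ)*((N:ℝ)+2)) := by
      intro m hm
      simp [Finset.mem_Icc] at hm
      have hα2m : (N:ℤ) + 2 ≤ α + 2*m := by omega
      have hα2mR : (N:ℝ) + 2 ≤ (α:ℝ) + 2*(m:ℝ) := by exact_mod_cast hα2m
      have hαR : (1:ℝ) ≤ (α:ℝ) := by exact_mod_cast hα
      apply one_div_le_one_div_of_le (by positivity)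
      have : (0:ℝ) < (α:ℝ) := by linarith
      nlinarith
    calc ∑ m ∈ Finset.Icc ((N:ℤ) - α + 1) (N:ℤ), (1:ℝ)/((α:ℝ)*((α:ℝ)+2*(m:ℝ)))
        ≤ ∑ m ∈ Finset.Icc ((N:ℤ) - α + 1) (N:ℤ), 1/((α:ℝ)*((N:ℝ)+2)) :=
          Finset.sum_le_sum hbound
      _ = ((Finset.Icc ((N:ℤ) - α + 1) (N:ℤ)).card : ℝ) * (1/((α:ℝ)*((N:ℝ)+2))) := by
          rw [Finset.sum_const, nsmul_eq_mul]
      _ ≤ (α:ℝ) * (1/((α:ℝ)*((N:ℝ)+2))) := by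
          have hcard : ((Finset.Icc ((N:ℤ) - α + 1) (N:ℤ)).card : ℤ) = α := by
            rw [Int.card_Icc]; omega
          have : ((Finset.Icc ((N:ℤ) - α + 1) (N:ℤ)).card : ℝ) = (α:ℝ) := by
            exact_mod_cast congrArg (fun x : ℤ => (x:ℝ)) hcard
          rw [this]
      _ = 1/((N:ℝ)+2) := by
          have hαR : (0:ℝ) < (α:ℝ) := by exact_mod_cast hα
          field_simp
      _ ≤ 6 * (Real.log N / N) := by
          rw [mul_div_assoc']
          rw [div_le_div_iff₀ (by positivity) hN0]
          nlinarith [mul_le_mul_of_nonneg_right hlogN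
            (le_of_lt (by positivity : (0:ℝ) < (N:ℝ)+2))]
  · -- large α : pull out 1/α, inner sum ≤ 6 log N
    have hαN : (1:ℝ)/(α:ℝ) ≤ 1/(N:ℝ) := by
      apply one_div_le_one_div_of_le hN0
      exact_mod_cast h1.le
    have hαpos : (0:ℝ) < (α:ℝ) := by exact_mod_cast hα
    have hsplit : ∀ m : ℤ, (1:ℝ)/((α:ℝ)*((α:ℝ)+2*(m:ℝ)))
        = (1/(α:ℝ)) * (1/((α:ℝ)+2*(m:ℝ))) := by
      intro m; rw [one_div_mul_one_div]
    have hinner : ∑ m ∈ (Finset.Icc (-(N:ℤ)) (N:ℤ)).filter (fun m => (N:ℤ) < α + m),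
        (1:ℝ)/((α:ℝ)+2*(m:ℝ)) ≤ 6 * Real.log N := by
      rcases le_or_gt α (2*(N:ℤ)) with h2 | h2
      · -- N < α ≤ 2N : values in [1, 4N]
        have := img_le_seg N α ((Finset.Icc (-(N:ℤ)) (N:ℤ)).filter (fun m => (N:ℤ) < α + m)) 1 (4*(N:ℤ)) le_rfl ?_ (by omega)
        · push_cast at this
          refine this.trans ?_
          have hlog4N : Real.log (4*(N:ℝ)) ≤ 3 * Real.log N := by
            have h4N : 4*(N:ℝ) ≤ (N:ℝ)^3 := by
              nlinarith [mul_le_mul_of_nonneg_left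
                (show (4:ℝ) ≤ (N:ℝ)^2 by nlinarith)
                (show (0:ℝ) ≤ (N:ℝ) by positivity)]
            calc Real.log (4*(N:ℝ)) ≤ Real.log ((N:ℝ)^3) :=
                  Real.log_le_log (by positivity) h4N
              _ = 3 * Real.log N := by rw [Real.log_pow]; norm_num
          rw [Real.log_one]
          norm_num
          linarith
        · intro m hm
          simp [Finset.mem_filter, Finset.mem_Icc] at hm
          omega
      · -- α > 2N : values in [α-2N, α+2N]
        have hfil : (Finset.Icc (-(N:ℤ)) (N:ℤ)).filter (fun m => (N:ℤ) < α + m)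
            = Finset.Icc (-(N:ℤ)) (N:ℤ) := by
          ext m; simp [Finset.mem_filter, Finset.mem_Icc]; omega
        rw [hfil]
        have key := img_le_seg N α (Finset.Icc (-(N:ℤ)) (N:ℤ)) (α - 2*(N:ℤ)) (α + 2*(N:ℤ)) (by omega) ?_ (by omega)
        · push_cast at key
          refine key.trans ?_
          have hlo1 : (1:ℝ) ≤ (α:ℝ) - 2*(N:ℝ) := by
            exact_mod_cast (show (1:ℤ) ≤ α - 2*(N:ℤ) by omega)
          have hhi : (0:ℝ) < (α:ℝ) + 2*(N:ℝ) := by linarith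
          have hZ : (α + 2*(N:ℤ)) ≤ (α - 2*(N:ℤ)) * (N:ℤ)^4 := by
            have ha : (1:ℤ) ≤ α - 2*(N:ℤ) := by omega
            have hNZ : (2:ℤ) ≤ (N:ℤ) := by exact_mod_cast hN
            have e1 : (8:ℤ)*(N:ℤ) ≤ (N:ℤ)^4 := by
              have h8 : (2:ℤ)^3 ≤ (N:ℤ)^3 := pow_le_pow_left₀ (by norm_num) hNZ 3
              nlinarith [mul_le_mul_of_nonneg_right h8 (show (0:ℤ) ≤ (N:ℤ) by omega)]
            have e2 := mul_le_mul_of_nonneg_right ha (show (0:ℤ) ≤ 4*(N:ℤ) by omega)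
            have e3 := mul_le_mul_of_nonneg_left e1 (show (0:ℤ) ≤ α - 2*(N:ℤ) by omega)
            have e4 := mul_le_mul_of_nonneg_left (show (1:ℤ) ≤ 4*(N:ℤ) by omega)
              (show (0:ℤ) ≤ α - 2*(N:ℤ) by omega)
            nlinarith [e2, e3, e4]
          have hratio : (α:ℝ) + 2*(N:ℝ) ≤ ((α:ℝ) - 2*(N:ℝ)) * (N:ℝ)^4 := by
            exact_mod_cast hZ
          have hll := Real.log_le_log hhi hratio
          rw [Real.log_mul (by linarith) (by positivity), Real.log_pow] at hll
          have hloinv : 1/((α:ℝ) - 2*(N:ℝ)) ≤ 1 := by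
            rw [div_le_one (by linarith)]; linarith
          push_cast at hll
          linarith
        · intro m hm
          simp [Finset.mem_Icc] at hm
          omega
    calc ∑ m ∈ (Finset.Icc (-(N:ℤ)) (N:ℤ)).filter (fun m => (N:ℤ) < α + m),
          (1:ℝ)/((α:ℝ)*((α:ℝ)+2*(m:ℝ)))
        = (1/(α:ℝ)) * ∑ m ∈ (Finset.Icc (-(N:ℤ)) (N:ℤ)).filter (fun m => (N:ℤ) < α + m),
            (1:ℝ)/((α:ℝ)+2*(m:ℝ)) := by
          rw [Finset.mul_sum]
          exact Finset.sum_congr rfl (fun m _ => hsplit m)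
      _ ≤ (1/(α:ℝ)) * (6 * Real.log N) :=
          mul_le_mul_of_nonneg_left hinner (by positivity)
      _ ≤ (1/(N:ℝ)) * (6 * Real.log N) :=
          mul_le_mul_of_nonneg_right hαN (by positivity)
      _ = 6 * (Real.log N / N) := by ring

theorem stmt_6 :
    ∃ C > 0, ∀ (N : ℕ), 2 ≤ N → ∀ v : ℤ → ℝ,
      (∀ α : ℤ, 0 ≤ v α) → Summable (fun α : ℤ => v α ^ 2) →
      ∑ m ∈ Finset.Icc (-(N : ℤ)) (N : ℤ),
          ∑' n : {n : ℤ // (N : ℤ) < n}, v ((n : ℤ) - m) ^ 2 / (((n : ℤ) : ℝ) ^ 2 - (m : ℝ) ^ 2) ≤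
        C * (Real.log N / N) * ∑' α : {α : ℤ // 1 ≤ α}, v (α : ℤ) ^ 2 := by
  refine ⟨6, by norm_num, ?_⟩
  intro N hN v hv hs
  set F : ℤ → ℤ → ℝ := fun m α =>
    if (N:ℤ) < α + m then v α ^ 2 * (1/((α:ℝ)*((α:ℝ)+2*(m:ℝ)))) else 0 with hF
  -- denominator is at least 1 on the support, for m in range
  have hden : ∀ m α : ℤ, -(N:ℤ) ≤ m → m ≤ N → (N:ℤ) < α + m →
      (1:ℝ) ≤ (α:ℝ)*((α:ℝ)+2*(m:ℝ)) := by
    intro m α hm1 hm2 hm3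
    have h1 : (1:ℤ) ≤ α := by omega
    have h2 : (1:ℤ) ≤ α + 2*m := by omega
    have : (1:ℤ) ≤ α * (α + 2*m) := one_le_mul_of_one_le_of_one_le h1 h2
    exact_mod_cast this
  have hFnn : ∀ m α : ℤ, -(N:ℤ) ≤ m → m ≤ N → 0 ≤ F m α := by
    intro m α hm1 hm2
    simp only [hF]
    split_ifs with h
    · have := hden m α hm1 hm2 h
      have hv2 := sq_nonneg (v α)
      positivity
    · exact le_refl 0
  have hFle : ∀ m α : ℤ, -(N:ℤ) ≤ m → m ≤ N → F m α ≤ v α ^ 2 := by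
    intro m α hm1 hm2
    simp only [hF]
    split_ifs with h
    · have h1 := hden m α hm1 hm2 h
      have : 1/((α:ℝ)*((α:ℝ)+2*(m:ℝ))) ≤ 1 := by
        rw [div_le_one (by linarith)]; linarith
      nlinarith [sq_nonneg (v α)]
    · positivity
  have hFsumm : ∀ m ∈ Finset.Icc (-(N:ℤ)) (N:ℤ), Summable (F m) := by
    intro m hm
    rw [Finset.mem_Icc] at hm
    exact Summable.of_nonneg_of_le (fun α => hFnn m α hm.1 hm.2)
      (fun α => hFle m α hm.1 hm.2) hs
  -- step 1 : rewrite each inner tsum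
  have step1 : ∀ m ∈ Finset.Icc (-(N:ℤ)) (N:ℤ),
      ∑' n : {n : ℤ // (N : ℤ) < n}, v ((n : ℤ) - m) ^ 2 / (((n : ℤ) : ℝ) ^ 2 - (m : ℝ) ^ 2)
        = ∑' α : ℤ, F m α := by
    intro m hm
    have e1 : ∑' n : {n : ℤ // (N : ℤ) < n}, v ((n : ℤ) - m) ^ 2 / (((n : ℤ) : ℝ) ^ 2 - (m : ℝ) ^ 2)
        = ∑' n : ℤ, Set.indicator {n : ℤ | (N:ℤ) < n}
            (fun n => v (n - m) ^ 2 / ((n : ℝ) ^ 2 - (m : ℝ) ^ 2)) n :=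
      tsum_subtype {n : ℤ | (N:ℤ) < n} (fun n => v (n - m) ^ 2 / ((n : ℝ) ^ 2 - (m : ℝ) ^ 2))
    rw [e1]
    rw [← (Equiv.addRight m).tsum_eq]
    apply tsum_congr
    intro α
    simp only [Equiv.coe_addRight, Set.indicator_apply, Set.mem_setOf_eq, hF]
    by_cases h : (N:ℤ) < α + m
    · rw [if_pos h, if_pos h]
      have hd : ((α + m : ℤ):ℝ)^2 - (m:ℝ)^2 = (α:ℝ)*((α:ℝ)+2*(m:ℝ)) := by
        push_cast; ring
      rw [show α + m - m = α by ring, hd, mul_one_div]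
    · rw [if_neg h, if_neg h]
  rw [Finset.sum_congr rfl step1]
  -- step 2 : swap sums
  rw [← Summable.tsum_finsetSum hFsumm]
  -- step 3 : pointwise bound and conclude
  set s1 : Set ℤ := {α : ℤ | 1 ≤ α} with hs1
  have hRHSsumm : Summable (fun α : ℤ =>
      6 * (Real.log N / N) * Set.indicator s1 (fun α => v α ^ 2) α) :=
    (hs.indicator s1).mul_left _
  have hpt : ∀ α : ℤ, ∑ m ∈ Finset.Icc (-(N:ℤ)) (N:ℤ), F m α
      ≤ 6 * (Real.log N / N) * Set.indicator s1 (fun α => v α ^ 2) α := by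
    intro α
    by_cases hα : 1 ≤ α
    · have hind : Set.indicator s1 (fun α => v α ^ 2) α = v α ^ 2 :=
        Set.indicator_of_mem (show α ∈ s1 from hα) (fun α => v α ^ 2)
      rw [hind]
      have hsum : ∑ m ∈ Finset.Icc (-(N:ℤ)) (N:ℤ), F m α
          = v α ^ 2 * ∑ m ∈ Finset.Icc (-(N:ℤ)) (N:ℤ),
              (if (N:ℤ) < α + m then 1/((α:ℝ)*((α:ℝ)+2*(m:ℝ))) else 0) := by
        rw [Finset.mul_sum]
        apply Finset.sum_congr rfl
        intro m _
        simp only [hF, mul_ite, mul_zero]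
      rw [hsum]
      calc v α ^ 2 * ∑ m ∈ Finset.Icc (-(N:ℤ)) (N:ℤ),
              (if (N:ℤ) < α + m then 1/((α:ℝ)*((α:ℝ)+2*(m:ℝ))) else 0)
          ≤ v α ^ 2 * (6 * (Real.log N / N)) :=
            mul_le_mul_of_nonneg_left (key_bound N hN α hα) (sq_nonneg _)
        _ = 6 * (Real.log N / N) * v α ^ 2 := by ring
    · have hz : ∀ m ∈ Finset.Icc (-(N:ℤ)) (N:ℤ), F m α = 0 := by
        intro m hm
        rw [Finset.mem_Icc] at hm
        simp only [hF]
        rw [if_neg (by omega)]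
      rw [Finset.sum_eq_zero hz]
      have : Set.indicator s1 (fun α => v α ^ 2) α = 0 :=
        Set.indicator_of_notMem (show α ∉ s1 from hα) (fun α => v α ^ 2)
      rw [this, mul_zero]
  have hLHSsumm : Summable (fun α : ℤ => ∑ m ∈ Finset.Icc (-(N:ℤ)) (N:ℤ), F m α) :=
    summable_sum hFsumm
  calc ∑' α : ℤ, ∑ m ∈ Finset.Icc (-(N:ℤ)) (N:ℤ), F m α
      ≤ ∑' α : ℤ, 6 * (Real.log N / N) * Set.indicator s1 (fun α => v α ^ 2) α :=
        Summable.tsum_le_tsum hpt hLHSsumm hRHSsumm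
    _ = 6 * (Real.log N / N) * ∑' α : ℤ, Set.indicator s1 (fun α => v α ^ 2) α :=
        tsum_mul_left
    _ = 6 * (Real.log N / N) * ∑' α : {α : ℤ // 1 ≤ α}, v (α : ℤ) ^ 2 := by
        rw [← tsum_subtype s1 (fun α => v α ^ 2)]
        rfl
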